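/- Fix n points X₁, …, X_n ∈ ℝ^p and define the sample objective f(v) = (1/n) Σ_i ‖X_i − v‖·‖X_i + v‖ and, for v ≠ ±X_i for all i, the Weiszfeld update T(v) = (Σ_i β_i(v) X_i)/(Σ_i γ_i(v)), where β_i(v) = (‖v + X_i‖² − ‖v − X_i‖²)/(‖v − X_i‖‖v + X_i‖) and γ_i(v) = (‖v + X_i‖² + ‖v − X_i‖²)/(‖v − X_i‖‖v + X_i‖). Then f(T(v)) ≤ f(v), with equality if and only if T(v) = v. -/
import Mathlib


open scoped BigOperators
open RealInnerProductSpace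

/-- The Weiszfeld update T decreases the objective
f(v) = (1/n)Σ‖X_i − v‖‖X_i + v‖, with equality iff T(v) = v. -/
theorem weiszfeld_descent (d n : ℕ) (hn : 0 < n)
    (X : Fin n → EuclideanSpace ℝ (Fin d)) (v : EuclideanSpace ℝ (Fin d))
    (hv : ∀ i, v ≠ X i ∧ v ≠ -X i) :
    let f : EuclideanSpace ℝ (Fin d) → ℝ := fun w =>
      (1 / n) * ∑ i, ‖X i - w‖ * ‖X i + w‖
    let β : Fin n → ℝ := fun i =>
      (‖v + X i‖ ^ 2 - ‖v - X i‖ ^ 2) / (‖v - X i‖ * ‖v + X i‖)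
    let γ : Fin n → ℝ := fun i =>
      (‖v + X i‖ ^ 2 + ‖v - X i‖ ^ 2) / (‖v - X i‖ * ‖v + X i‖)
    let T : EuclideanSpace ℝ (Fin d) := (∑ i, γ i)⁻¹ • ∑ i, β i • X i
    f T ≤ f v ∧ (f T = f v ↔ T = v) := by
  intro f β γ T
  have hp : ∀ i, 0 < ‖v - X i‖ := fun i =>
    norm_pos_iff.2 (sub_ne_zero.2 (hv i).1)
  have hq : ∀ i, 0 < ‖v + X i‖ := fun i =>
    norm_pos_iff.2 (fun h => (hv i).2 (eq_neg_iff_add_eq_zero.2 h))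
  -- abbreviations
  set a : Fin n → ℝ := fun i => ‖v - X i‖ / ‖v + X i‖ with ha
  set b : Fin n → ℝ := fun i => ‖v + X i‖ / ‖v - X i‖ with hb
  set F : EuclideanSpace ℝ (Fin d) → ℝ := fun w => ∑ i, ‖X i - w‖ * ‖X i + w‖ with hF
  set H : EuclideanSpace ℝ (Fin d) → ℝ :=
    fun u => ∑ i, (a i * ‖X i + u‖ ^ 2 + b i * ‖X i - u‖ ^ 2) with hH
  set s : ℝ := ∑ i, γ i with hs
  have hγpos : ∀ i, 0 < γ i := by
    intro i
    have h1 := hp i; have h2 := hq i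
    exact div_pos (by positivity) (by positivity)
  have hspos : 0 < s := by
    have : Nonempty (Fin n) := ⟨⟨0, hn⟩⟩
    exact Finset.sum_pos (fun i _ => hγpos i) Finset.univ_nonempty
  have hsT : s • T = ∑ i, β i • X i := smul_inv_smul₀ hspos.ne' _
  -- quadratic expansion of H
  have hK5 : ∀ u, H u = s * ‖u‖ ^ 2 - 2 * ⟪∑ i, β i • X i, u⟫ + ∑ i, γ i * ‖X i‖ ^ 2 := by
    intro u
    rw [sum_inner]
    simp only [real_inner_smul_left]
    rw [hH, hs, Finset.sum_mul, Finset.mul_sum, ← Finset.sum_sub_distrib, ← Finset.sum_add_distrib]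
    refine Finset.sum_congr rfl fun i _ => ?_
    have hnorm1 : ‖X i + u‖ ^ 2 = ‖X i‖ ^ 2 + 2 * ⟪X i, u⟫ + ‖u‖ ^ 2 := norm_add_sq_real _ _
    have hnorm2 : ‖X i - u‖ ^ 2 = ‖X i‖ ^ 2 - 2 * ⟪X i, u⟫ + ‖u‖ ^ 2 := norm_sub_sq_real _ _
    have h1 := (hp i).ne'
    have h2 := (hq i).ne'
    simp only [ha, hb]
    rw [hnorm1, hnorm2]
    show _ = (‖v + X i‖ ^ 2 + ‖v - X i‖ ^ 2) / (‖v - X i‖ * ‖v + X i‖) * ‖u‖ ^ 2 -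
        2 * ((‖v + X i‖ ^ 2 - ‖v - X i‖ ^ 2) / (‖v - X i‖ * ‖v + X i‖) * ⟪X i, u⟫) +
        (‖v + X i‖ ^ 2 + ‖v - X i‖ ^ 2) / (‖v - X i‖ * ‖v + X i‖) * ‖X i‖ ^ 2
    field_simp
    ring
  -- H is a quadratic centered at T
  have hK6 : ∀ u, H u = s * ‖u - T‖ ^ 2 + ((∑ i, γ i * ‖X i‖ ^ 2) - s * ‖T‖ ^ 2) := by
    intro u
    have h1 : ⟪∑ i, β i • X i, u⟫ = s * ⟪T, u⟫ := by
      rw [← hsT, real_inner_smul_left]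
    have h2 : ‖u - T‖ ^ 2 = ‖u‖ ^ 2 - 2 * ⟪u, T⟫ + ‖T‖ ^ 2 := norm_sub_sq_real _ _
    rw [hK5 u, h1, h2, real_inner_comm u T]
    ring
  -- AM-GM bound: 2 F u ≤ H u
  have hAM : ∀ u, 2 * F u ≤ H u := by
    intro u
    rw [hF, hH, Finset.mul_sum]
    refine Finset.sum_le_sum fun i _ => ?_
    have h1 := hp i
    have h2 := hq i
    have hx : (0:ℝ) ≤ ‖X i + u‖ := norm_nonneg _
    have hy : (0:ℝ) ≤ ‖X i - u‖ := norm_nonneg _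
    simp only [ha, hb]
    rw [div_mul_eq_mul_div, div_mul_eq_mul_div, div_add_div _ _ h2.ne' h1.ne',
      le_div_iff₀ (by positivity)]
    nlinarith [sq_nonneg (‖v - X i‖ * ‖X i + u‖ - ‖v + X i‖ * ‖X i - u‖)]
  -- equality at v
  have hEqv : H v = 2 * F v := by
    rw [hF, hH, Finset.mul_sum]
    refine Finset.sum_congr rfl fun i _ => ?_
    have h1 := (hp i).ne'
    have h2 := (hq i).ne'
    have e1 : ‖X i + v‖ = ‖v + X i‖ := by rw [add_comm]
    have e2 : ‖X i - v‖ = ‖v - X i‖ := norm_sub_rev _ _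
    simp only [ha, hb, e1, e2]
    field_simp
    ring
  have hHT : H T = (∑ i, γ i * ‖X i‖ ^ 2) - s * ‖T‖ ^ 2 := by
    rw [hK6 T]; simp
  have hHv : H v = s * ‖v - T‖ ^ 2 + ((∑ i, γ i * ‖X i‖ ^ 2) - s * ‖T‖ ^ 2) := hK6 v
  have hchain : 2 * F T + s * ‖v - T‖ ^ 2 ≤ 2 * F v := by
    have := hAM T
    nlinarith [this, hHT, hHv, hEqv]
  have hFle : F T ≤ F v := by nlinarith [hchain, mul_nonneg hspos.le (sq_nonneg ‖v - T‖)]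
  have hnn : (0:ℝ) < 1 / n := by positivity
  have hfT : f T = (1 / n) * F T := rfl
  have hfv : f v = (1 / n) * F v := rfl
  constructor
  · rw [hfT, hfv]
    exact mul_le_mul_of_nonneg_left hFle hnn.le
  · constructor
    · intro heq
      have hFeq : F T = F v := by
        have := heq
        rw [hfT, hfv] at this
        exact mul_left_cancel₀ hnn.ne' this
      have hle0 : s * ‖v - T‖ ^ 2 ≤ 0 := by nlinarith [hchain]
      have hz2 : ‖v - T‖ ^ 2 = 0 := by
        have h0 : ‖v - T‖ ^ 2 ≤ 0 := by
          by_contra hpos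
          push_neg at hpos
          nlinarith [mul_pos hspos hpos]
        exact le_antisymm h0 (sq_nonneg _)
      have hz : v - T = 0 := norm_eq_zero.1 ((pow_eq_zero_iff two_ne_zero).1 hz2)
      exact (sub_eq_zero.1 hz).symm
    · intro hTv
      rw [hTv]
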